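/- Suppose ψ : (0,∞) → (0,∞) is regularly varying at infinity with index k > 0 and that a probability density f on [0,∞)^d satisfies the continuous convergence −log f(t x_t)/ψ(t) → g_*(x) as t → ∞, for every x ∈ [0,∞)^d and every sequence x_t → x, with g_* continuous. Then g_* is positively homogeneous of order k: g_*(λx) = λ^k g_*(x) for all λ > 0 and all x ∈ [0,∞)^d; consequently g = g_*^{1/k} is positively homogeneous of order 1 and has the same unit level set {x : g(x) ≤ 1} = {x : g_*(x) ≤ 1}. -/

import Mathlib

open MeasureTheory Filter Topology Pointwise

/-- `f` is regularly varying at infinity with index `ρ`. -/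
def RegVaryingAtTop (f : ℝ → ℝ) (ρ : ℝ) : Prop :=
  ∀ x : ℝ, 0 < x → Tendsto (fun t => f (t * x) / f t) atTop (𝓝 (x ^ ρ))

/-- if `ψ ∈ RV_k^∞` with `k > 0` and a probability density `f` on `[0,∞)^d`
satisfies the continuous convergence `-log f(t xₜ)/ψ(t) → g(x)` with `g` continuous, then `g`
is positively homogeneous of order `k`; consequently `g^{1/k}` is positively homogeneous of
order `1` and has the same unit (sub)level set as `g`. -/
theorem gauge_homogeneous_of_regvar
    {d : ℕ} (ψ : ℝ → ℝ) (hψpos : ∀ t : ℝ, 0 < t → 0 < ψ t)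
    (k : ℝ) (hk : 0 < k) (hψ : RegVaryingAtTop ψ k)
    -- `f` is a probability density on `[0,∞)^d`
    (f : (Fin d → ℝ) → ℝ) (hfmeas : Measurable f) (hfnonneg : ∀ y, 0 ≤ f y)
    (hfsupp : ∀ y : Fin d → ℝ, ¬ (∀ j, 0 ≤ y j) → f y = 0)
    (hfint : ∫ y, f y = 1)
    -- continuous convergence of `-log f(t xₜ)/ψ(t)` to `g(x)`, `g` continuous
    (g : (Fin d → ℝ) → ℝ) (hgcont : ContinuousOn g {x | ∀ j, 0 ≤ x j})
    (hconv : ∀ x : Fin d → ℝ, (∀ j, 0 ≤ x j) →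
      ∀ xt : ℝ → (Fin d → ℝ), (∀ t, ∀ j, 0 ≤ xt t j) → Tendsto xt atTop (𝓝 x) →
        Tendsto (fun t => -Real.log (f (t • xt t)) / ψ t) atTop (𝓝 (g x))) :
    (∀ lam : ℝ, 0 < lam → ∀ x : Fin d → ℝ, (∀ j, 0 ≤ x j) →
        g (lam • x) = lam ^ k * g x) ∧
    (∀ lam : ℝ, 0 < lam → ∀ x : Fin d → ℝ, (∀ j, 0 ≤ x j) →
        (g (lam • x)) ^ (1 / k) = lam * (g x) ^ (1 / k)) ∧
    {x : Fin d → ℝ | (∀ j, 0 ≤ x j) ∧ (g x) ^ (1 / k) ≤ 1} =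
      {x : Fin d → ℝ | (∀ j, 0 ≤ x j) ∧ g x ≤ 1} := by
  classical
  -- integrability of f
  have hfi : Integrable f := by
    by_contra hni
    rw [integral_undef hni] at hfint
    norm_num at hfint
  -- nonnegativity of the limit g on the positive orthant
  have hg0 : ∀ x : Fin d → ℝ, (∀ j, 0 ≤ x j) → 0 ≤ g x := by
    intro x hx
    by_contra hneg
    push_neg at hneg
    -- Step 1 : a locally uniform bound from continuous convergence
    have hU : ∃ δ : ℝ, 0 < δ ∧ ∃ T : ℝ, ∀ t, T ≤ t → ∀ y : Fin d → ℝ,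
        dist y x ≤ δ → (∀ j, 0 ≤ y j) → -Real.log (f (t • y)) / ψ t < g x / 2 := by
      by_contra hcon
      push_neg at hcon
      have key : ∀ (n : ℕ) (s : ℝ), ∃ t, max (n : ℝ) (s + 1) ≤ t ∧ ∃ y : Fin d → ℝ,
          dist y x ≤ 1 / ((n : ℝ) + 1) ∧ (∀ j, 0 ≤ y j) ∧
            g x / 2 ≤ -Real.log (f (t • y)) / ψ t :=
        fun n s => hcon (1 / ((n : ℝ) + 1)) (by positivity) (max (n : ℝ) (s + 1))
      choose Tf hTf Yf hY1 hY2 hY3 using key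
      obtain ⟨seq, hseq0, hseqS⟩ : ∃ seq : ℕ → ℝ, seq 0 = Tf 0 0 ∧
          ∀ m, seq (m + 1) = Tf (m + 1) (seq m) :=
        ⟨fun n => Nat.rec (Tf 0 0) (fun m ih => Tf (m + 1) ih) n, rfl, fun m => rfl⟩
      obtain ⟨ys, hys0, hysS⟩ : ∃ ys : ℕ → (Fin d → ℝ), ys 0 = Yf 0 0 ∧
          ∀ m, ys (m + 1) = Yf (m + 1) (seq m) :=
        ⟨fun n => Nat.rec (Yf 0 0) (fun m _ => Yf (m + 1) (seq m)) n, rfl, fun m => rfl⟩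
      have hfact : ∀ n : ℕ, (n : ℝ) ≤ seq n ∧ dist (ys n) x ≤ 1 / ((n : ℝ) + 1) ∧
          (∀ j, 0 ≤ ys n j) ∧ g x / 2 ≤ -Real.log (f (seq n • ys n)) / ψ (seq n) := by
        intro n
        cases n with
        | zero =>
          rw [hseq0, hys0]
          exact ⟨by exact_mod_cast (le_max_left _ _).trans (hTf 0 0), hY1 0 0, hY2 0 0, hY3 0 0⟩
        | succ m =>
          rw [hseqS, hysS]
          exact ⟨(le_max_left _ _).trans (hTf (m + 1) (seq m)), hY1 (m + 1) (seq m),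
            hY2 (m + 1) (seq m), hY3 (m + 1) (seq m)⟩
      have hmono : StrictMono seq := by
        apply strictMono_nat_of_lt_succ
        intro n
        rw [hseqS]
        exact lt_of_lt_of_le (lt_add_one _) ((le_max_right _ _).trans (hTf (n + 1) (seq n)))
      set xt : ℝ → (Fin d → ℝ) :=
        fun t => if h : ∃ n, seq n = t then ys (Nat.find h) else x with hxt
      have hxt_nn : ∀ t, ∀ j, 0 ≤ xt t j := by
        intro t j
        simp only [hxt]
        split_ifs with h
        · exact (hfact _).2.2.1 j
        · exact hx j
      have hxt_tendsto : Tendsto xt atTop (𝓝 x) := by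
        rw [Metric.tendsto_atTop]
        intro ε hε
        obtain ⟨M, hM⟩ := exists_nat_one_div_lt hε
        refine ⟨seq M + 1, fun t ht => ?_⟩
        simp only [hxt]
        by_cases h : ∃ n, seq n = t
        · rw [dif_pos h]
          have hfs := Nat.find_spec h
          set n := Nat.find h with hn
          have hMn : M < n := by
            by_contra hle
            push_neg at hle
            have := hmono.monotone hle
            rw [hfs] at this
            linarith
          have hnn : 1 / ((n : ℝ) + 1) ≤ 1 / ((M : ℝ) + 1) := by
            apply one_div_le_one_div_of_le (by positivity)
            have : (M : ℝ) ≤ (n : ℝ) := by exact_mod_cast hMn.le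
            linarith
          calc dist (ys n) x ≤ 1 / ((n : ℝ) + 1) := (hfact n).2.1
            _ ≤ 1 / ((M : ℝ) + 1) := hnn
            _ < ε := hM
        · rw [dif_neg h, dist_self]
          exact hε
      have hlim := hconv x hx xt hxt_nn hxt_tendsto
      have hev := hlim.eventually (gt_mem_nhds (show g x < g x / 2 by linarith))
      rw [eventually_atTop] at hev
      obtain ⟨N, hN⟩ := hev
      obtain ⟨n, hn⟩ := exists_nat_ge N
      have hxtn : xt (seq n) = ys n := by
        simp only [hxt]
        rw [dif_pos ⟨n, rfl⟩]
        exact congrArg ys (hmono.injective (Nat.find_spec (⟨n, rfl⟩ : ∃ m, seq m = seq n)))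
      have h5 := hN (seq n) (hn.trans (hfact n).1)
      rw [hxtn] at h5
      exact absurd h5 (not_lt.mpr (hfact n).2.2.2)
    -- Step 2 : the uniform bound contradicts `∫ f = 1`
    obtain ⟨δ, hδ, T, hT⟩ := hU
    set x' : Fin d → ℝ := fun j => x j + δ / 2 with hx'
    set S := Metric.closedBall x' (δ / 4) with hSdef
    have hSy : ∀ y ∈ S, dist y x ≤ δ ∧ ∀ j, 0 ≤ y j := by
      intro y hy
      rw [hSdef, Metric.mem_closedBall] at hy
      have hj : ∀ j, |y j - x' j| ≤ δ / 4 := by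
        intro j
        have h1 := dist_le_pi_dist y x' j
        rw [Real.dist_eq] at h1
        linarith
      have hx'j : ∀ j, x' j = x j + δ / 2 := fun j => rfl
      constructor
      · rw [dist_pi_le_iff hδ.le]
        intro j
        rw [Real.dist_eq, abs_le]
        have h1 := (abs_le.mp (hj j)).1
        have h2 := (abs_le.mp (hj j)).2
        rw [hx'j j] at h1 h2
        constructor <;> linarith
      · intro j
        have h1 := (abs_le.mp (hj j)).1
        rw [hx'j j] at h1
        have := hx j
        linarith
    have hSpos : 0 < volume S :=
      (Metric.measure_ball_pos volume x' (by positivity)).trans_le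
        (measure_mono Metric.ball_subset_closedBall)
    have hSfin : volume S ≠ ⊤ := measure_closedBall_lt_top.ne
    set m := (volume S).toReal with hm
    have hmpos : 0 < m := ENNReal.toReal_pos hSpos.ne' hSfin
    set t := max (max T 1) (1 / m) with htdef
    have htT : T ≤ t := (le_max_left T 1).trans (le_max_left _ _)
    have ht1 : (1 : ℝ) ≤ t := (le_max_right T 1).trans (le_max_left _ _)
    have htpos : (0 : ℝ) < t := lt_of_lt_of_le one_pos ht1
    have hψt := hψpos t htpos
    have hflow : ∀ z ∈ t • S, Real.exp (-(g x / 2) * ψ t) ≤ f z := by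
      intro z hz
      rw [Set.mem_smul_set] at hz
      obtain ⟨y, hy, rfl⟩ := hz
      obtain ⟨hyd, hyn⟩ := hSy y hy
      have hr := hT t htT y hyd hyn
      have hlog : -(g x / 2) * ψ t < Real.log (f (t • y)) := by
        rw [div_lt_iff₀ hψt] at hr
        linarith
      have hb : 0 < -(g x / 2) * ψ t := mul_pos (by linarith) hψt
      have hfpos : 0 < f (t • y) := by
        rcases lt_or_eq_of_le (hfnonneg (t • y)) with h | h
        · exact h
        · exfalso
          rw [← h, Real.log_zero] at hlog
          linarith
      calc Real.exp (-(g x / 2) * ψ t)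
          ≤ Real.exp (Real.log (f (t • y))) := Real.exp_le_exp.mpr hlog.le
        _ = f (t • y) := Real.exp_log hfpos
    have hsmuleq : t • S = Metric.closedBall (t • x') (‖t‖ * (δ / 4)) := by
      rw [hSdef]
      exact _root_.smul_closedBall t x' (by positivity)
    have hAmeas : MeasurableSet (t • S) := by
      rw [hsmuleq]; exact measurableSet_closedBall
    have hAvol : volume (t • S) = ENNReal.ofReal (|t ^ d|) * volume S := by
      have h := MeasureTheory.Measure.addHaar_smul (volume : Measure (Fin d → ℝ)) t S
      rwa [Module.finrank_pi, Fintype.card_fin] at h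
    have hAfin : volume (t • S) ≠ ⊤ := by
      rw [hAvol]
      exact ENNReal.mul_ne_top ENNReal.ofReal_ne_top hSfin
    have hAtoReal : (volume (t • S)).toReal = t ^ d * m := by
      rw [hAvol, ENNReal.toReal_mul, ENNReal.toReal_ofReal (abs_nonneg _),
        abs_of_pos (pow_pos htpos d), hm]
    have h1le : (1 : ℝ) ≤ t ^ d * m := by
      rcases Nat.eq_zero_or_pos d with hd | hd
      · subst hd
        have hSuniv : S = Set.univ := Set.eq_univ_of_forall fun z => by
          have hz : z = x' := funext fun j => j.elim0
          rw [hSdef, hz]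
          exact Metric.mem_closedBall_self (by positivity)
        have hv1 : volume S = 1 := by
          rw [hSuniv]
          simp [MeasureTheory.volume_pi, MeasureTheory.Measure.pi_univ]
        rw [pow_zero, one_mul, hm, hv1, ENNReal.toReal_one]
      · have h1m : 1 / m ≤ t := le_max_right _ _
        have htd : 1 / m ≤ t ^ d := h1m.trans (le_self_pow₀ ht1 hd.ne')
        calc (1 : ℝ) = (1 / m) * m := by field_simp
          _ ≤ t ^ d * m := mul_le_mul_of_nonneg_right htd hmpos.le
    have hlow : Real.exp (-(g x / 2) * ψ t) * (volume (t • S)).toReal ≤ ∫ z in t • S, f z :=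
      by
        have h := setIntegral_ge_of_const_le_real hAmeas hAfin hflow hfi.integrableOn
        simp only [Measure.real, smul_eq_mul] at h
        linarith
    have hup : (∫ z in t • S, f z) ≤ 1 := by
      rw [← hfint]
      exact setIntegral_le_integral hfi (Filter.Eventually.of_forall hfnonneg)
    have hexp : 1 < Real.exp (-(g x / 2) * ψ t) := by
      rw [show (1 : ℝ) = Real.exp 0 from Real.exp_zero.symm]
      exact Real.exp_lt_exp.mpr (mul_pos (by linarith) hψt)
    rw [hAtoReal] at hlow
    nlinarith
  -- homogeneity of order k
  have hom : ∀ lam : ℝ, 0 < lam → ∀ x : Fin d → ℝ, (∀ j, 0 ≤ x j) →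
      g (lam • x) = lam ^ k * g x := by
    intro lam hlam x hx
    have hx' : ∀ j, 0 ≤ (lam • x) j := fun j => mul_nonneg hlam.le (hx j)
    have h1 : Tendsto (fun t => -Real.log (f (t • (lam • x))) / ψ t) atTop (𝓝 (g (lam • x))) :=
      hconv (lam • x) hx' (fun _ => lam • x) (fun _ => hx') tendsto_const_nhds
    have h2 : Tendsto (fun t => -Real.log (f (t • x)) / ψ t) atTop (𝓝 (g x)) :=
      hconv x hx (fun _ => x) (fun _ => hx) tendsto_const_nhds
    have hmul : Tendsto (fun t : ℝ => t * lam) atTop atTop :=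
      Tendsto.atTop_mul_const hlam tendsto_id
    have h2' : Tendsto (fun t => -Real.log (f ((t * lam) • x)) / ψ (t * lam)) atTop (𝓝 (g x)) :=
      h2.comp hmul
    have h3 := h2'.mul (hψ lam hlam)
    have heq : ∀ᶠ t in atTop, (-Real.log (f ((t * lam) • x)) / ψ (t * lam)) * (ψ (t * lam) / ψ t)
        = -Real.log (f (t • (lam • x))) / ψ t := by
      filter_upwards [eventually_gt_atTop (0 : ℝ)] with t ht
      have hψ1 : ψ (t * lam) ≠ 0 := (hψpos _ (mul_pos ht hlam)).ne'
      have hψ2 : ψ t ≠ 0 := (hψpos t ht).ne'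
      rw [smul_smul]
      field_simp
    have h4 := tendsto_nhds_unique h1 (h3.congr' heq)
    rw [h4, mul_comm]
  refine ⟨hom, ?_, ?_⟩
  · intro lam hlam x hx
    rw [hom lam hlam x hx, Real.mul_rpow (by positivity) (hg0 x hx),
      ← Real.rpow_mul hlam.le, mul_one_div, div_self hk.ne', Real.rpow_one]
  · ext x
    simp only [Set.mem_setOf_eq]
    constructor
    · rintro ⟨hx, hle⟩
      refine ⟨hx, ?_⟩
      by_contra hgt
      push_neg at hgt
      have h1 : 1 < (g x) ^ (1 / k) :=
        (Real.one_lt_rpow_iff_of_pos (by linarith)).mpr (Or.inl ⟨hgt, by positivity⟩)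
      linarith
    · rintro ⟨hx, hle⟩
      exact ⟨hx, Real.rpow_le_one (hg0 x hx) hle (by positivity)⟩
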